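/- The cone in ℝ³ given as the convex hull of {(1-cos t, sin t, 1) : 0 ≤ t ≤ 2π} ∪ {(0,0,0)} is not LNC: the points z = (0,0,1), z' = (0,0,0), and z_n = (1-cos(1/n), sin(1/n), 1) satisfy z_n → z, z_n ∈ Q, but z_n + (z'-z)/2 ∉ Q for all n. -/

import Mathlib

open Set Filter Topology Real

/-- Locally nonconical (LNC). -/
def LNC {X : Type*} [AddCommGroup X] [Module ℝ X] [TopologicalSpace X] (Q : Set X) : Prop :=
  ∀ x ∈ Q, ∀ x' ∈ Q,
    ∃ U, U ⊆ Q ∧ U ∈ nhdsWithin x Q ∧ ∀ u ∈ U, u + (2⁻¹ : ℝ) • (x' - x) ∈ Q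

/-- Linear map sending `(x,y,z)` to the complex number `(x - z) + y i`. -/
noncomputable def coneL : (ℝ × ℝ × ℝ) →ₗ[ℝ] ℂ where
  toFun p := ⟨p.1 - p.2.2, p.2.1⟩
  map_add' p q := by simp [Complex.ext_iff]; ring
  map_smul' c p := by simp [Complex.ext_iff, Complex.real_smul]; ring

/-- A convex function whose nonpositivity set contains the cone. -/
noncomputable def coneF (p : ℝ × ℝ × ℝ) : ℝ := ‖coneL p‖ - p.2.2

lemma coneF_convexOn : ConvexOn ℝ univ coneF := by
  have h1 : ConvexOn ℝ univ (fun p : ℝ × ℝ × ℝ => ‖coneL p‖) := by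
    have := (convexOn_norm (convex_univ (E := ℂ))).comp_linearMap coneL
    exact this
  have h2 : ConcaveOn ℝ univ (fun p : ℝ × ℝ × ℝ => p.2.2) := by
    refine ⟨convex_univ, ?_⟩
    intro x _ y _ a b _ _ _
    simp [Prod.smul_def]
  exact h1.sub h2

lemma coneF_norm (p : ℝ × ℝ × ℝ) :
    coneF p = Real.sqrt ((p.1 - p.2.2)^2 + p.2.1^2) - p.2.2 := by
  simp [coneF, Complex.norm_def, Complex.normSq_apply, coneL,
    LinearMap.coe_mk, sq]

/-- The right circular cone in `ℝ³`, the convex hull of the circle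
`{(1 - cos t, sin t, 1) : 0 ≤ t ≤ 2π}` together with the origin, is not LNC: the points
`z = (0,0,1)`, `z' = (0,0,0)` and `z_n = (1 - cos(1/n), sin(1/n), 1)` lie in `Q`,
`z_n → z`, but `z_n + (z' - z)/2 ∉ Q` for all `n ≥ 1`. -/
theorem cone_not_lnc :
    let Q : Set (ℝ × ℝ × ℝ) := convexHull ℝ
      ({p : ℝ × ℝ × ℝ | ∃ t ∈ Set.Icc (0 : ℝ) (2 * π),
        p = (1 - Real.cos t, Real.sin t, 1)} ∪ {(0, 0, 0)})
    ((0 : ℝ), (0 : ℝ), (1 : ℝ)) ∈ Q ∧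
    ((0 : ℝ), (0 : ℝ), (0 : ℝ)) ∈ Q ∧
    (∀ n : ℕ, 0 < n →
      ((1 - Real.cos (1 / (n : ℝ)), Real.sin (1 / (n : ℝ)), (1 : ℝ)) : ℝ × ℝ × ℝ) ∈ Q) ∧
    Tendsto (fun n : ℕ =>
        ((1 - Real.cos (1 / (n : ℝ)), Real.sin (1 / (n : ℝ)), (1 : ℝ)) : ℝ × ℝ × ℝ))
      atTop (𝓝 ((0 : ℝ), (0 : ℝ), (1 : ℝ))) ∧
    (∀ n : ℕ, 0 < n →
      ((1 - Real.cos (1 / (n : ℝ)), Real.sin (1 / (n : ℝ)), (1 : ℝ)) : ℝ × ℝ × ℝ) +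
        (2⁻¹ : ℝ) • (((0 : ℝ), (0 : ℝ), (0 : ℝ)) - ((0 : ℝ), (0 : ℝ), (1 : ℝ))) ∉ Q) ∧
    ¬ LNC Q := by
  intro Q
  have hpi : (3 : ℝ) < π := Real.pi_gt_three
  -- circle points are in Q
  have hcirc : ∀ t ∈ Set.Icc (0 : ℝ) (2 * π),
      ((1 - Real.cos t, Real.sin t, (1 : ℝ)) : ℝ × ℝ × ℝ) ∈ Q := fun t ht =>
    subset_convexHull ℝ _ (Or.inl ⟨t, ht, rfl⟩)
  have hz : ((0 : ℝ), (0 : ℝ), (1 : ℝ)) ∈ Q := by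
    have h0 : (0 : ℝ) ∈ Set.Icc (0 : ℝ) (2 * π) := ⟨le_refl 0, by linarith⟩
    have := hcirc 0 h0
    simpa using this
  have hz' : ((0 : ℝ), (0 : ℝ), (0 : ℝ)) ∈ Q := subset_convexHull ℝ _ (Or.inr rfl)
  have hzn : ∀ n : ℕ, 0 < n →
      ((1 - Real.cos (1 / (n : ℝ)), Real.sin (1 / (n : ℝ)), (1 : ℝ)) : ℝ × ℝ × ℝ) ∈ Q := by
    intro n hn
    have hn1 : (1 : ℝ) ≤ (n : ℝ) := by exact_mod_cast hn
    have h1 : (0 : ℝ) ≤ 1 / (n : ℝ) := by positivity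
    have h2 : 1 / (n : ℝ) ≤ 1 := by
      rw [div_le_one (by linarith)]; exact hn1
    exact hcirc _ ⟨h1, by linarith⟩
  -- the limit
  have htend : Tendsto (fun n : ℕ =>
      ((1 - Real.cos (1 / (n : ℝ)), Real.sin (1 / (n : ℝ)), (1 : ℝ)) : ℝ × ℝ × ℝ))
      atTop (𝓝 ((0 : ℝ), (0 : ℝ), (1 : ℝ))) := by
    have hc : Continuous (fun t : ℝ => ((1 - Real.cos t, Real.sin t, (1 : ℝ)) : ℝ × ℝ × ℝ)) := by
      fun_prop
    have h0 : Tendsto (fun n : ℕ => 1 / (n : ℝ)) atTop (𝓝 0) :=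
      tendsto_one_div_atTop_nhds_zero_nat
    have := (hc.tendsto 0).comp h0
    simpa [Function.comp_def] using this
  -- Q is contained in the sublevel set of coneF
  have hQsub : Q ⊆ {p : ℝ × ℝ × ℝ | coneF p ≤ 0} := by
    apply convexHull_min
    · rintro p (⟨t, _, rfl⟩ | rfl)
      · rw [Set.mem_setOf_eq, coneF_norm]
        have h1 : ((1 : ℝ) - Real.cos t - 1) ^ 2 + Real.sin t ^ 2 = 1 := by
          nlinarith [Real.sin_sq_add_cos_sq t]
        simp only [h1, Real.sqrt_one]
        norm_num
      · rw [Set.mem_setOf_eq, coneF_norm]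
        norm_num
    · have := coneF_convexOn.convex_le 0
      simpa using this
  -- the shifted points are not in Q
  have hnot : ∀ n : ℕ, 0 < n →
      ((1 - Real.cos (1 / (n : ℝ)), Real.sin (1 / (n : ℝ)), (1 : ℝ)) : ℝ × ℝ × ℝ) +
        (2⁻¹ : ℝ) • (((0 : ℝ), (0 : ℝ), (0 : ℝ)) - ((0 : ℝ), (0 : ℝ), (1 : ℝ))) ∉ Q := by
    intro n hn hmem
    have := hQsub hmem
    rw [Set.mem_setOf_eq] at this
    set u : ℝ := 1 / (n : ℝ) with hu
    have hpt : ((1 - Real.cos u, Real.sin u, (1 : ℝ)) : ℝ × ℝ × ℝ) +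
        (2⁻¹ : ℝ) • (((0 : ℝ), (0 : ℝ), (0 : ℝ)) - ((0 : ℝ), (0 : ℝ), (1 : ℝ))) =
        ((1 - Real.cos u, Real.sin u, (2⁻¹ : ℝ)) : ℝ × ℝ × ℝ) := by
      simp [Prod.ext_iff]
      norm_num
    rw [hpt, coneF_norm] at this
    -- cos u < 1
    have hn1 : (1 : ℝ) ≤ (n : ℝ) := by exact_mod_cast hn
    have hupos : 0 < u := by rw [hu]; positivity
    have hule : u ≤ π := by
      rw [hu, div_le_iff₀ (by linarith)]
      nlinarith
    have hcos : Real.cos u < 1 := by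
      have := Real.cos_lt_cos_of_nonneg_of_le_pi (le_refl 0) hule hupos
      simpa using this
    -- the square root is > 1/2
    have harg : (1 / 4 : ℝ) < (1 - Real.cos u - 2⁻¹) ^ 2 + Real.sin u ^ 2 := by
      nlinarith [Real.sin_sq_add_cos_sq u]
    have hargnn : (0 : ℝ) ≤ (1 - Real.cos u - 2⁻¹) ^ 2 + Real.sin u ^ 2 := by positivity
    have hsq := Real.sq_sqrt hargnn
    have hnn := Real.sqrt_nonneg ((1 - Real.cos u - 2⁻¹) ^ 2 + Real.sin u ^ 2)
    nlinarith [hsq, hnn, harg, this]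
  refine ⟨hz, hz', hzn, htend, hnot, ?_⟩
  -- not LNC
  intro hlnc
  obtain ⟨U, hUQ, hUnhds, hU⟩ := hlnc _ hz _ hz'
  have htendW : Tendsto (fun n : ℕ =>
      ((1 - Real.cos (1 / (n : ℝ)), Real.sin (1 / (n : ℝ)), (1 : ℝ)) : ℝ × ℝ × ℝ))
      atTop (nhdsWithin ((0 : ℝ), (0 : ℝ), (1 : ℝ)) Q) := by
    rw [tendsto_nhdsWithin_iff]
    refine ⟨htend, ?_⟩
    filter_upwards [eventually_gt_atTop 0] with n hn
    exact hzn n hn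
  have hev : ∀ᶠ n : ℕ in atTop,
      ((1 - Real.cos (1 / (n : ℝ)), Real.sin (1 / (n : ℝ)), (1 : ℝ)) : ℝ × ℝ × ℝ) ∈ U :=
    htendW hUnhds
  obtain ⟨n, hn1, hnU⟩ := (hev.and (eventually_gt_atTop 0)).exists
  exact hnot n hnU (hU _ hn1)
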